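/- arXiv:2206.06526 — 3 statements merged into one kernel-verified Lean document; each statement's English description precedes it below -/
import Mathlib

section
/- Under the same setting, the feasibility lower bound α_lb(P) = max_{q ∈ [0,1]} min{ I(q)/D_KL(P ‖ N(0,1)), 1/(2(c_2² + q(χ²(P, N(0,1)) − c_2²))) } satisfies α_lb(P) ≥ (1/4) · min{ 1/c_2², 1/( D_KL(P ‖ N(0,1))^{1/3} (χ²(P, N(0,1)) − c_2²)^{2/3} ) }. -/
open MeasureTheory ProbabilityTheory Filter Topology BoundedContinuousFunction
open scoped ENNReal NNReal

/-- The standard Gaussian measure `N(0, I)` on `ι → ℝ`. -/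
noncomputable def stdGaussian (ι : Type*) [Fintype ι] : Measure (ι → ℝ) :=
  Measure.pi fun _ => gaussianReal 0 1

/-- The law of `n` i.i.d. `N(0, I_d)` rows: the data matrix `X ∈ ℝ^{n×d}`. -/
noncomputable def dataMeasure (n d : ℕ) : Measure (Fin n → Fin d → ℝ) :=
  Measure.pi fun _ : Fin n => stdGaussian (Fin d)

/-- `Wᵀ x ∈ ℝ^m`, the projection of a data point `x ∈ ℝ^d` by `W ∈ ℝ^{d×m}`. -/
def projW {d m : ℕ} (W : Fin d → Fin m → ℝ) (x : Fin d → ℝ) : Fin m → ℝ :=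
  fun j => ∑ l, W l j * x l

/-- `WᵀW = I_m`: the columns of `W` are orthonormal. -/
def IsOrtho {d m : ℕ} (W : Fin d → Fin m → ℝ) : Prop :=
  ∀ j k : Fin m, (∑ l, W l j * W l k) = if j = k then (1 : ℝ) else 0

/-- Uniform measure on `[0,1]`, used as a source of auxiliary randomness `ω`. -/
noncomputable def unif01 : Measure ℝ := volume.restrict (Set.Icc 0 1)

/-- `P` is `(α, m)`-feasible: along any sequence of dimensions `d = d(n)` with `n/d → α`,
there is a sequence of random orthogonal matrices `W_n(X, ω) ∈ ℝ^{d×m}` such that the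
empirical distribution of the projected points `Wᵀx_i` converges weakly to `P`
in probability. -/
def Feasible (m : ℕ) (α : ℝ) (P : Measure (Fin m → ℝ)) : Prop :=
  ∀ d : ℕ → ℕ, Tendsto (fun n : ℕ => (n : ℝ) / (d n : ℝ)) atTop (nhds α) →
    ∃ W : ∀ n : ℕ, (Fin n → Fin (d n) → ℝ) → ℝ → (Fin (d n) → Fin m → ℝ),
      (∀ n, Measurable (Function.uncurry (W n))) ∧
      (∀ n X ω, IsOrtho (W n X ω)) ∧
      (∀ f : BoundedContinuousFunction (Fin m → ℝ) ℝ, ∀ ε : ℝ, 0 < ε →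
        Tendsto (fun n : ℕ =>
          ((dataMeasure n (d n)).prod unif01)
            {p | ε ≤ |(∑ i, f (projW (W n p.1 p.2) (p.1 i))) / (n : ℝ) - ∫ z, f z ∂P|})
          atTop (nhds 0))

/-- The set of couplings of two measures. -/
def couplings {α β : Type*} [MeasurableSpace α] [MeasurableSpace β]
    (P : Measure α) (Q : Measure β) : Set (Measure (α × β)) :=
  {γ | γ.map Prod.fst = P ∧ γ.map Prod.snd = Q}

/-- The second Wasserstein distance (with Euclidean cost) between measures on `ℝ^m`. -/
noncomputable def W2 {m : ℕ} (P Q : Measure (Fin m → ℝ)) : ℝ≥0∞ :=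
  ⨅ γ ∈ couplings P Q,
    (∫⁻ z : (Fin m → ℝ) × (Fin m → ℝ),
        ENNReal.ofReal (∑ i, (z.1 i - z.2 i) ^ 2) ∂γ) ^ (1 / 2 : ℝ)

/-- The Gaussian `N(0, s² I_m)` on `ℝ^m`. -/
noncomputable def scaledGaussian (m : ℕ) (s : ℝ) : Measure (Fin m → ℝ) :=
  (stdGaussian (Fin m)).map fun x => fun i => s * x i

/-- The standard normal density `φ`. -/
noncomputable def stdPDF (x : ℝ) : ℝ := ProbabilityTheory.gaussianPDFReal 0 1 x

/-- The chi-square distance `χ²(P, N(0,1)) = ∫ (p − φ)²/φ` for `P` of density `p`. -/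
noncomputable def chiSq1 (p : ℝ → ℝ) : ℝ := ∫ x, (p x - stdPDF x) ^ 2 / stdPDF x

/-- `c₂ = (1/√2) ∫ (x² − 1)(p(x) − φ(x)) dx`, the degree-2 Hermite coefficient. -/
noncomputable def cTwo (p : ℝ → ℝ) : ℝ :=
  (1 / Real.sqrt 2) * ∫ x, (x ^ 2 - 1) * (p x - stdPDF x)

/-- `D_KL(P ‖ N(0,1)) = ∫ p log(p/φ)` for `P` of density `p`. -/
noncomputable def dklGauss1 (p : ℝ → ℝ) : ℝ := ∫ x, p x * Real.log (p x / stdPDF x)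

/-- `I(q) = −(1/2) log(1 − q²)`. -/
noncomputable def Iq (q : ℝ) : ℝ := -(1 / 2) * Real.log (1 - q ^ 2)

/-- The feasibility lower bound
`α_lb(P) = max_{q ∈ [0,1]} min { I(q)/D_KL(P‖N(0,1)), 1/(2(c₂² + q(χ² − c₂²))) }`. -/
noncomputable def alphaLB1 (p : ℝ → ℝ) : ℝ :=
  sSup ((fun q : ℝ => min (Iq q / dklGauss1 p)
      (1 / (2 * (cTwo p ^ 2 + q * (chiSq1 p - cTwo p ^ 2))))) '' Set.Icc (0 : ℝ) 1)

private lemma stdPDF_pos' (x : ℝ) : 0 < stdPDF x :=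
  ProbabilityTheory.gaussianPDFReal_pos 0 1 x one_ne_zero

private lemma dklGauss1_nonneg' (p : ℝ → ℝ) (hpmeas : Measurable p) (hp0 : ∀ x, 0 ≤ p x)
    (hprob : IsProbabilityMeasure (volume.withDensity fun x => ENNReal.ofReal (p x))) :
    0 ≤ dklGauss1 p := by
  have huniv := hprob.measure_univ
  rw [withDensity_apply _ MeasurableSet.univ, setLIntegral_univ] at huniv
  have hpInt : Integrable p := by
    refine ⟨hpmeas.aestronglyMeasurable, ?_⟩
    rw [hasFiniteIntegral_iff_ofReal (Filter.Eventually.of_forall hp0), huniv]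
    exact ENNReal.one_lt_top
  have hp1 : ∫ x, p x = 1 := by
    rw [integral_eq_lintegral_of_nonneg_ae (Filter.Eventually.of_forall hp0)
      hpmeas.aestronglyMeasurable, huniv]
    simp
  have hφInt : Integrable stdPDF := ProbabilityTheory.integrable_gaussianPDFReal 0 1
  have hφ1 : ∫ x, stdPDF x = 1 := ProbabilityTheory.integral_gaussianPDFReal_eq_one 0 one_ne_zero
  by_cases hf : Integrable (fun x => p x * Real.log (p x / stdPDF x))
  · have hg : Integrable (fun x => p x - stdPDF x) := hpInt.sub hφInt
    have hle : ∀ x, p x - stdPDF x ≤ p x * Real.log (p x / stdPDF x) := by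
      intro x
      have hφx : 0 < stdPDF x := stdPDF_pos' x
      rcases (hp0 x).lt_or_eq with hpx | hpx
      · have hlog : Real.log (stdPDF x / p x) ≤ stdPDF x / p x - 1 :=
          Real.log_le_sub_one_of_pos (div_pos hφx hpx)
        have hswap : Real.log (p x / stdPDF x) = - Real.log (stdPDF x / p x) := by
          rw [← Real.log_inv, inv_div]
        have hmul : p x * (1 - stdPDF x / p x) = p x - stdPDF x := by
          field_simp
        have : p x * (1 - stdPDF x / p x) ≤ p x * Real.log (p x / stdPDF x) := by
          rw [hswap]
          have h1 : 1 - stdPDF x / p x ≤ - Real.log (stdPDF x / p x) := by linarith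
          exact mul_le_mul_of_nonneg_left h1 hpx.le
        linarith [hmul ▸ this]
      · rw [← hpx]
        simp
        linarith [hφx]
    have h0 : (0:ℝ) = ∫ x, (p x - stdPDF x) := by
      rw [integral_sub hpInt hφInt, hp1, hφ1]; ring
    have := integral_mono hg hf hle
    unfold dklGauss1
    linarith [h0 ▸ this]
  · unfold dklGauss1
    rw [integral_undef hf]

set_option maxHeartbeats 2000000 in
/-- **Characterization of `α_lb(P)`.**  Under the assumptions of the 1-dimensional inner
bound (density `p`, mean zero, finite chi-square distance),
`α_lb(P) ≥ (1/4)·min{ 1/c₂², 1/(D_KL(P‖N(0,1))^{1/3} (χ² − c₂²)^{2/3}) }`. -/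
theorem alphaLB1_char (p : ℝ → ℝ) (hpmeas : Measurable p) (hp0 : ∀ x, 0 ≤ p x)
    (hprob : IsProbabilityMeasure (volume.withDensity fun x => ENNReal.ofReal (p x)))
    (hmean : ∫ x, x * p x = 0)
    (hchi : Integrable (fun x => (p x - stdPDF x) ^ 2 / stdPDF x)) :
    alphaLB1 p ≥ (1 / 4) *
      min (1 / cTwo p ^ 2)
        (1 / (dklGauss1 p ^ ((1 : ℝ) / 3) * (chiSq1 p - cTwo p ^ 2) ^ ((2 : ℝ) / 3))) := by
  have hD0 : 0 ≤ dklGauss1 p := dklGauss1_nonneg' p hpmeas hp0 hprob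
  unfold alphaLB1
  set c : ℝ := cTwo p ^ 2 with hcdef
  set D : ℝ := dklGauss1 p with hDdef
  set V : ℝ := chiSq1 p - cTwo p ^ 2 with hVdef
  set T : ℝ := D ^ ((1:ℝ)/3) * V ^ ((2:ℝ)/3) with hTdef
  set S : Set ℝ := (fun q : ℝ => min (Iq q / D) (1 / (2 * (c + q * V)))) '' Set.Icc (0:ℝ) 1
    with hSdef
  have hc0 : 0 ≤ c := sq_nonneg _
  clear_value D
  have h0mem : (0:ℝ) ∈ S := by
    refine ⟨0, ⟨le_refl 0, zero_le_one⟩, ?_⟩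
    show min (Iq 0 / D) (1 / (2 * (c + 0 * V))) = 0
    have hIq0 : Iq 0 = 0 := by simp [Iq]
    rw [hIq0, zero_div, zero_mul, add_zero]
    exact min_eq_left (by positivity)
  have hα0 : (0:ℝ) ≤ sSup S := by
    by_cases hbdd : BddAbove S
    · exact le_csSup hbdd h0mem
    · rw [Real.sSup_of_not_bddAbove hbdd]
  rcases le_or_gt (min (1/c) (1/T)) 0 with hmin | hmin
  · have h4 : (1:ℝ)/4 * min (1/c) (1/T) ≤ 0 := by linarith
    linarith
  have h1c : 0 < 1/c := lt_of_lt_of_le hmin (min_le_left _ _)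
  have h1T : 0 < 1/T := lt_of_lt_of_le hmin (min_le_right _ _)
  have hcpos : 0 < c := one_div_pos.mp h1c
  have hTpos : 0 < T := one_div_pos.mp h1T
  clear_value c
  have hVpos : 0 < V := by
    by_contra hv
    push_neg at hv
    rcases hv.lt_or_eq with hlt | heq
    · have h23 : V ^ ((2:ℝ)/3) < 0 := by
        rw [Real.rpow_def_of_neg hlt]
        have hpi : (2/3:ℝ) * Real.pi = Real.pi - Real.pi / 3 := by ring
        rw [hpi, Real.cos_pi_sub, Real.cos_pi_div_three]
        nlinarith [Real.exp_pos (Real.log V * (2/3))]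
      have hD13' : 0 ≤ D ^ ((1:ℝ)/3) := Real.rpow_nonneg hD0 _
      rw [hTdef] at hTpos
      nlinarith
    · rw [hTdef, heq, Real.zero_rpow (by norm_num : ((2:ℝ)/3) ≠ 0), mul_zero] at hTpos
      exact lt_irrefl 0 hTpos
  have hDpos : 0 < D := by
    rcases hD0.lt_or_eq with h' | h'
    · exact h'
    · rw [hTdef, ← h', Real.zero_rpow (by norm_num : ((1:ℝ)/3) ≠ 0), zero_mul] at hTpos
      exact absurd hTpos (lt_irrefl 0)
  clear_value V
  have hVsplit : V ^ ((1:ℝ)/3) * V ^ ((2:ℝ)/3) = V := by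
    rw [← Real.rpow_add hVpos]
    norm_num
  have hDsplit : D ^ ((1:ℝ)/3) * D ^ ((2:ℝ)/3) = D := by
    rw [← Real.rpow_add hDpos]
    norm_num
  have hV13 : 0 < V ^ ((1:ℝ)/3) := Real.rpow_pos_of_pos hVpos _
  have hV23 : 0 < V ^ ((2:ℝ)/3) := Real.rpow_pos_of_pos hVpos _
  have hD13 : 0 < D ^ ((1:ℝ)/3) := Real.rpow_pos_of_pos hDpos _
  have hD23 : 0 < D ^ ((2:ℝ)/3) := Real.rpow_pos_of_pos hDpos _
  have hhalf : (1:ℝ)/4 * min (1/c) (1/T) ≤ 1/(2*(c+T)) := by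
    rcases le_total c T with hct | hct
    · calc (1:ℝ)/4 * min (1/c) (1/T) ≤ 1/4 * (1/T) := by
            have := min_le_right (1/c) (1/T)
            nlinarith
        _ = 1/(4*T) := by ring
        _ ≤ 1/(2*(c+T)) := one_div_le_one_div_of_le (by linarith) (by linarith)
    · calc (1:ℝ)/4 * min (1/c) (1/T) ≤ 1/4 * (1/c) := by
            have := min_le_left (1/c) (1/T)
            nlinarith
        _ = 1/(4*c) := by ring
        _ ≤ 1/(2*(c+T)) := one_div_le_one_div_of_le (by linarith) (by linarith)
  have hbdd : BddAbove S := by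
    refine ⟨1/(2*c), ?_⟩
    rintro y ⟨q, hq, rfl⟩
    calc min (Iq q / D) (1 / (2 * (c + q * V))) ≤ 1 / (2 * (c + q * V)) := min_le_right _ _
      _ ≤ 1/(2*c) := one_div_le_one_div_of_le (by linarith)
            (by nlinarith [hq.1, hVpos.le, hcpos])
  rcases lt_or_ge D V with hDV | hVD
  · -- Case A : D < V, take q₀ = (D/V)^(1/3)
    have hq0pos : 0 < (D/V) ^ ((1:ℝ)/3) := Real.rpow_pos_of_pos (div_pos hDpos hVpos) _
    have hq0lt1 : (D/V) ^ ((1:ℝ)/3) < 1 :=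
      Real.rpow_lt_one (div_pos hDpos hVpos).le ((div_lt_one hVpos).mpr hDV) (by norm_num)
    have hq0eq : (D/V) ^ ((1:ℝ)/3) = D ^ ((1:ℝ)/3) / V ^ ((1:ℝ)/3) :=
      Real.div_rpow hDpos.le hVpos.le _
    have hq0sq' : ((D/V) ^ ((1:ℝ)/3)) ^ 2 = (D/V) ^ ((2:ℝ)/3) := by
      rw [← Real.rpow_natCast ((D/V) ^ ((1:ℝ)/3)) 2,
        ← Real.rpow_mul (div_pos hDpos hVpos).le]
      norm_num
    obtain ⟨q₀, hq₀def⟩ : ∃ q₀ : ℝ, q₀ = (D/V) ^ ((1:ℝ)/3) := ⟨_, rfl⟩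
    rw [← hq₀def] at hq0pos hq0lt1 hq0eq hq0sq'
    have hq0mem : q₀ ∈ Set.Icc (0:ℝ) 1 := ⟨hq0pos.le, hq0lt1.le⟩
    have hVdiv : V / V ^ ((1:ℝ)/3) = V ^ ((2:ℝ)/3) := by
      rw [div_eq_iff hV13.ne', mul_comm]
      exact hVsplit.symm
    have hq0V : q₀ * V = T := by
      rw [hq0eq, hTdef, div_mul_eq_mul_div, mul_div_assoc, hVdiv]
    have hq0sq : q₀ ^ 2 = D ^ ((2:ℝ)/3) / V ^ ((2:ℝ)/3) := by
      rw [hq0sq', Real.div_rpow hDpos.le hVpos.le]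
    refine le_trans ?_ (le_csSup hbdd ⟨q₀, hq0mem, rfl⟩)
    refine le_min ?_ ?_
    · -- bound on Iq q₀ / D
      have h1q : 0 < 1 - q₀ ^ 2 := by nlinarith [hq0pos, hq0lt1]
      have hlog : Real.log (1 - q₀ ^ 2) ≤ -q₀ ^ 2 := by
        have := Real.log_le_sub_one_of_pos h1q
        linarith
      have hIq : q₀ ^ 2 / 2 ≤ Iq q₀ := by
        unfold Iq
        linarith
      have hval : q₀ ^ 2 / 2 / D = 1 / (2*T) := by
        rw [hq0sq, hTdef, div_div,
          div_eq_div_iff (by nlinarith [mul_pos hV23 hDpos])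
            (by nlinarith [mul_pos hD13 hV23])]
        field_simp
        linear_combination hDsplit
      have h1 : 1/(2*T) ≤ Iq q₀ / D := by
        rw [← hval]
        gcongr
      calc (1:ℝ)/4 * min (1/c) (1/T) ≤ 1/4 * (1/T) := by
            have := min_le_right (1/c) (1/T)
            nlinarith
        _ = 1/(4*T) := by ring
        _ ≤ 1/(2*T) := one_div_le_one_div_of_le (by linarith) (by linarith)
        _ ≤ Iq q₀ / D := h1
    · rw [hq0V]
      exact hhalf
  · -- Case B : V ≤ D
    obtain ⟨R, hRdef⟩ : ∃ R : ℝ, R = 1/4 * min (1/c) (1/T) := ⟨_, rfl⟩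
    have hRpos : 0 < R := by
      have := lt_min h1c h1T
      rw [hRdef]
      nlinarith
    obtain ⟨E, hEdef⟩ : ∃ E : ℝ, E = Real.exp (-(2*D*R)) := ⟨_, rfl⟩
    have hEpos : 0 < E := hEdef ▸ Real.exp_pos _
    have hE1 : E < 1 := by
      rw [hEdef, ← Real.exp_zero]
      exact Real.exp_lt_exp.mpr (by nlinarith)
    obtain ⟨q₀, hq₀def⟩ : ∃ q₀ : ℝ, q₀ = Real.sqrt (1 - E) := ⟨_, rfl⟩
    have hq0mem : q₀ ∈ Set.Icc (0:ℝ) 1 := by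
      rw [hq₀def]
      exact ⟨Real.sqrt_nonneg _, Real.sqrt_le_one.mpr (by linarith)⟩
    have hq0sq : q₀ ^ 2 = 1 - E := by
      rw [hq₀def]
      exact Real.sq_sqrt (by linarith)
    have hIq : Iq q₀ = D * R := by
      unfold Iq
      rw [hq0sq]
      have h11 : (1:ℝ) - (1 - E) = E := by ring
      rw [h11, hEdef, Real.log_exp]
      ring
    have hVT : V ≤ T := by
      have h13 : V ^ ((1:ℝ)/3) ≤ D ^ ((1:ℝ)/3) := Real.rpow_le_rpow hVpos.le hVD (by norm_num)
      rw [hTdef]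
      calc V = V ^ ((1:ℝ)/3) * V ^ ((2:ℝ)/3) := hVsplit.symm
        _ ≤ D ^ ((1:ℝ)/3) * V ^ ((2:ℝ)/3) := by nlinarith
    refine le_trans ?_ (le_csSup hbdd ⟨q₀, hq0mem, rfl⟩)
    rw [← hRdef]
    refine le_min ?_ ?_
    · rw [hIq, mul_comm, mul_div_assoc, div_self hDpos.ne', mul_one]
    · have hq0V : q₀ * V ≤ T := by
        calc q₀ * V ≤ 1 * V := by nlinarith [hq0mem.2, hVpos.le, hq0mem.1]
          _ = V := one_mul V
          _ ≤ T := hVT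
      calc R ≤ 1/(2*(c+T)) := hRdef ▸ hhalf
        _ ≤ 1 / (2 * (c + q₀ * V)) := one_div_le_one_div_of_le
              (by nlinarith [hq0mem.1, hVpos.le, hcpos]) (by linarith)
end

section
/- Let P and Q be two probability measures with finite q-th moments (q > 1) on a Polish space S, and let M > 0 be such that W_p(P, Q) ≤ M for every p ∈ [1, q). Then W_q(P, Q) ≤ M. -/
open MeasureTheory Filter Topology
open scoped ENNReal NNReal

/-- The `p`-th Wasserstein distance between measures on a metric space:
`W_p(P, Q) = inf_γ ( ∫ dist(x, y)^p dγ )^{1/p}` over couplings `γ` of `P` and `Q`. -/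
noncomputable def Wp {S : Type*} [MeasurableSpace S] [PseudoMetricSpace S]
    (p : ℝ) (P Q : Measure S) : ℝ≥0∞ :=
  ⨅ γ ∈ {γ : Measure (S × S) | γ.map Prod.fst = P ∧ γ.map Prod.snd = Q},
    (∫⁻ z : S × S, ENNReal.ofReal (dist z.1 z.2) ^ p ∂γ) ^ (1 / p)

/-- Tails of a finite moment integral can be made small. -/
lemma tail_small {S : Type*} [MeasurableSpace S] [MetricSpace S] [OpensMeasurableSpace S]
    [TopologicalSpace.SeparableSpace S]
    (μ : Measure S) (q : ℝ) (x₀ : S)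
    (hfin : (∫⁻ x, ENNReal.ofReal (dist x x₀) ^ q ∂μ) < ⊤)
    {η : ℝ≥0∞} (hη : 0 < η) :
    ∃ n : ℕ, ∫⁻ x in {x : S | (n : ℝ) < dist x x₀}, ENNReal.ofReal (dist x x₀) ^ q ∂μ < η := by
  set f : S → ℝ≥0∞ := fun x => ENNReal.ofReal (dist x x₀) ^ q with hf
  have hdm : Measurable fun x : S => dist x x₀ :=
    (continuous_id.dist continuous_const).measurable
  have hfm : Measurable f :=
    ENNReal.continuous_rpow_const.measurable.comp hdm.ennreal_ofReal
  have hsets : ∀ n : ℕ, MeasurableSet {x : S | (n : ℝ) < dist x x₀} := fun n =>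
    measurableSet_lt measurable_const hdm
  have key : Tendsto (fun n : ℕ => ∫⁻ x, ({x : S | (n : ℝ) < dist x x₀}).indicator f x ∂μ)
      atTop (𝓝 (∫⁻ _x, (0 : ℝ≥0∞) ∂μ)) := by
    refine tendsto_lintegral_of_dominated_convergence f
      (fun n => hfm.indicator (hsets n)) (fun n => ?_) hfin.ne ?_
    · exact Filter.Eventually.of_forall fun x => Set.indicator_le_self _ _ x
    · refine Filter.Eventually.of_forall fun x => ?_
      have : ∀ᶠ n : ℕ in atTop,
          ({x : S | (n : ℝ) < dist x x₀}).indicator f x = 0 := by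
        filter_upwards [eventually_ge_atTop ⌈dist x x₀⌉₊] with n hn
        refine Set.indicator_of_notMem ?_ _
        simp only [Set.mem_setOf_eq, not_lt]
        exact le_trans (Nat.le_ceil _) (by exact_mod_cast hn)
      refine Tendsto.congr' ?_ tendsto_const_nhds
      exact this.mono fun n hn => hn.symm
  rw [lintegral_zero] at key
  have := (key.eventually (gt_mem_nhds hη)).exists
  obtain ⟨n, hn⟩ := this
  exact ⟨n, by rwa [lintegral_indicator (hsets n)] at hn⟩

/-- **Continuity of `W_p` in `p`.**  Let `P`, `Q` be probability measures with finite `q`-th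
moments (`q > 1`) on a Polish space `S`, and `M > 0` with `W_p(P, Q) ≤ M` for every
`p ∈ [1, q)`.  Then `W_q(P, Q) ≤ M`. -/
theorem Wq_le_of_Wp_le {S : Type*} [MeasurableSpace S] [MetricSpace S]
    [TopologicalSpace.SeparableSpace S] [CompleteSpace S] [BorelSpace S]
    (P Q : Measure S) (hP : IsProbabilityMeasure P) (hQ : IsProbabilityMeasure Q)
    (q : ℝ) (hq : 1 < q)
    (hPq : ∃ x₀ : S, (∫⁻ x, ENNReal.ofReal (dist x x₀) ^ q ∂P) < ⊤)
    (hQq : ∃ x₀ : S, (∫⁻ x, ENNReal.ofReal (dist x x₀) ^ q ∂Q) < ⊤)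
    (M : ℝ) (hM : 0 < M)
    (h : ∀ p : ℝ, 1 ≤ p → p < q → Wp p P Q ≤ ENNReal.ofReal M) :
    Wp q P Q ≤ ENNReal.ofReal M := by
  obtain ⟨x₀, hPx⟩ := hPq
  obtain ⟨y₀, hQy⟩ := hQq
  haveI : SecondCountableTopology S := UniformSpace.secondCountable_of_separable S
  have hq0 : (0 : ℝ) < q := lt_trans one_pos hq
  refine ENNReal.le_of_forall_pos_le_add fun ε hε _ => ?_
  set e : ℝ := (ε : ℝ) with he_def
  have he : 0 < e := by exact_mod_cast hε
  have main : Wp q P Q ≤ ENNReal.ofReal (M + e) := by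
    set A : ℝ := M + e / 2 with hA_def
    set B : ℝ := M + e with hB_def
    have hA : 0 < A := by positivity
    have hB : 0 < B := by positivity
    have hAB : A < B := by simp only [hA_def, hB_def]; linarith
    set δ : ℝ := (B ^ q - A ^ q) / 2 with hδ_def
    have hδ : 0 < δ := by
      have := Real.rpow_lt_rpow hA.le hAB hq0
      simp only [hδ_def]; linarith
    set η : ℝ≥0∞ := ENNReal.ofReal δ / (2 * (3 : ℝ≥0∞) ^ q) with hη_def
    have h3q_ne_top : (2 * (3 : ℝ≥0∞) ^ q) ≠ ⊤ :=
      ENNReal.mul_ne_top (by norm_num)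
        (ENNReal.rpow_ne_top_of_nonneg hq0.le (by norm_num))
    have hη : 0 < η :=
      ENNReal.div_pos (ENNReal.ofReal_pos.2 hδ).ne' h3q_ne_top
    obtain ⟨nP, hnP⟩ := tail_small P q x₀ hPx hη
    obtain ⟨nQ, hnQ⟩ := tail_small Q q y₀ hQy hη
    set N : ℕ := max nP nQ with hN_def
    set R : ℝ := max ((N : ℝ) + 1) (dist x₀ y₀) with hR_def
    have hRC : dist x₀ y₀ ≤ R := le_max_right _ _
    have hR1 : (N : ℝ) + 1 ≤ R := le_max_left _ _
    have hR0 : 0 < R := lt_of_lt_of_le (by positivity) hR1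
    have hRnP : (nP : ℝ) < R := by
      have h1 : (nP : ℝ) ≤ (N : ℝ) := by exact_mod_cast le_max_left nP nQ
      linarith
    have hRnQ : (nQ : ℝ) < R := by
      have h1 : (nQ : ℝ) ≤ (N : ℝ) := by exact_mod_cast le_max_right nP nQ
      linarith
    set K : ℝ := 3 * R with hK_def
    have hK : 0 < K := by positivity
    -- choose p < q close to q by continuity
    set φ : ℝ → ℝ := fun p => K ^ (q - p) * A ^ p with hφ_def
    have hφcont : ContinuousAt φ q := by
      have c1 : ContinuousAt (fun p : ℝ => K ^ (q - p)) q :=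
        (Real.continuousAt_const_rpow hK.ne').comp
          ((continuous_const.sub continuous_id).continuousAt)
      have c2 : ContinuousAt (fun p : ℝ => A ^ p) q :=
        Real.continuousAt_const_rpow hA.ne'
      exact c1.mul c2
    have hφq : φ q = A ^ q := by
      simp [hφ_def, sub_self, Real.rpow_zero]
    have hφlt : φ q < A ^ q + δ := by rw [hφq]; linarith
    have hev1 : ∀ᶠ p in 𝓝 q, φ p < A ^ q + δ :=
      hφcont.eventually_lt_const hφlt
    have hev2 : ∀ᶠ p in 𝓝 q, 1 < p := eventually_gt_nhds hq
    have hev : ∀ᶠ p in 𝓝[<] q, (φ p < A ^ q + δ ∧ 1 < p) ∧ p < q := by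
      refine (((hev1.and hev2).filter_mono nhdsWithin_le_nhds).and ?_)
      exact eventually_mem_nhdsWithin
    obtain ⟨p, ⟨hφp, hp1⟩, hpq⟩ := hev.exists
    have hp0 : (0 : ℝ) < p := lt_trans one_pos hp1
    have hqp : 0 ≤ q - p := sub_nonneg.2 hpq.le
    -- get a near-optimal coupling for exponent p
    have hWp : Wp p P Q < ENNReal.ofReal A := by
      refine lt_of_le_of_lt (h p hp1.le hpq) ?_
      rw [ENNReal.ofReal_lt_ofReal_iff hA]
      simp only [hA_def]; linarith
    rw [Wp] at hWp
    simp only [iInf_lt_iff] at hWp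
    obtain ⟨γ, hγmem, hγlt⟩ := hWp
    obtain ⟨hγ1, hγ2⟩ := hγmem
    -- Ip bound
    have hIp : (∫⁻ z : S × S, ENNReal.ofReal (dist z.1 z.2) ^ p ∂γ)
        ≤ ENNReal.ofReal A ^ p := by
      have h2 := ENNReal.rpow_le_rpow hγlt.le hp0.le
      rwa [← ENNReal.rpow_mul, one_div_mul_cancel hp0.ne', ENNReal.rpow_one] at h2
    -- measurability helpers
    have hdm1 : Measurable fun x : S => dist x x₀ :=
      (continuous_id.dist continuous_const).measurable
    have hdm2 : Measurable fun y : S => dist y y₀ :=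
      (continuous_id.dist continuous_const).measurable
    set G1 : S → ℝ≥0∞ :=
      ({x : S | R < dist x x₀}).indicator (fun x => ENNReal.ofReal (dist x x₀) ^ q) with hG1_def
    set G2 : S → ℝ≥0∞ :=
      ({y : S | R < dist y y₀}).indicator (fun y => ENNReal.ofReal (dist y y₀) ^ q) with hG2_def
    have hs1 : MeasurableSet {x : S | R < dist x x₀} := measurableSet_lt measurable_const hdm1
    have hs2 : MeasurableSet {y : S | R < dist y y₀} := measurableSet_lt measurable_const hdm2
    have hG1m : Measurable G1 :=
      (ENNReal.continuous_rpow_const.measurable.comp hdm1.ennreal_ofReal).indicator hs1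
    have hG2m : Measurable G2 :=
      (ENNReal.continuous_rpow_const.measurable.comp hdm2.ennreal_ofReal).indicator hs2
    have hDm : Measurable fun z : S × S => ENNReal.ofReal (dist z.1 z.2) :=
      ((continuous_fst.dist continuous_snd).measurable).ennreal_ofReal
    -- pointwise bound
    have keypt : ∀ z : S × S,
        ENNReal.ofReal (dist z.1 z.2) ^ q ≤
          ENNReal.ofReal K ^ (q - p) * ENNReal.ofReal (dist z.1 z.2) ^ p
            + (3 : ℝ≥0∞) ^ q * (G1 z.1 + G2 z.2) := by
      intro z
      set a : ℝ := dist z.1 x₀ with ha_def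
      set b : ℝ := dist z.2 y₀ with hb_def
      set d : ℝ := dist z.1 z.2 with hd_def
      have ha0 : 0 ≤ a := dist_nonneg
      have hb0 : 0 ≤ b := dist_nonneg
      have hd0 : 0 ≤ d := dist_nonneg
      have htri : d ≤ a + dist x₀ y₀ + b := by
        have := dist_triangle4 z.1 x₀ y₀ z.2
        simpa [ha_def, hb_def, hd_def, dist_comm] using this
      by_cases hcase : a ≤ R ∧ b ≤ R
      · -- then d ≤ 3R = K
        have hdK : d ≤ K := by
          simp only [hK_def]; linarith [hcase.1, hcase.2, hRC]
        rcases eq_or_lt_of_le hd0 with hd00 | hd00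
        · rw [← hd00]
          simp [ENNReal.zero_rpow_of_pos hq0]
        · have hne0 : ENNReal.ofReal d ≠ 0 := (ENNReal.ofReal_pos.2 hd00).ne'
          have hnet : ENNReal.ofReal d ≠ ⊤ := ENNReal.ofReal_ne_top
          have : ENNReal.ofReal d ^ q
              = ENNReal.ofReal d ^ (q - p) * ENNReal.ofReal d ^ p := by
            rw [← ENNReal.rpow_add _ _ hne0 hnet, sub_add_cancel]
          rw [this]
          refine le_trans (mul_le_mul_left
            (ENNReal.rpow_le_rpow (ENNReal.ofReal_le_ofReal hdK) hqp) _) ?_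
          exact le_self_add
      · -- one of a, b exceeds R; bound by the larger one
        rcases le_total a b with hab | hab
        · have hRb : R < b := by
            by_contra hc
            exact hcase ⟨le_trans hab (not_lt.1 hc), not_lt.1 hc⟩
          have hd3 : d ≤ 3 * b := by
            have h1 : dist x₀ y₀ ≤ R := hRC
            linarith
          have hle : ENNReal.ofReal d ^ q ≤ (3 : ℝ≥0∞) ^ q * ENNReal.ofReal b ^ q := by
            rw [← ENNReal.mul_rpow_of_nonneg _ _ hq0.le]
            refine ENNReal.rpow_le_rpow ?_ hq0.le
            calc ENNReal.ofReal d ≤ ENNReal.ofReal (3 * b) := ENNReal.ofReal_le_ofReal hd3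
              _ = 3 * ENNReal.ofReal b := by
                  rw [ENNReal.ofReal_mul (by norm_num)]; norm_num
          have hGval : G2 z.2 = ENNReal.ofReal b ^ q := by
            simp only [hG2_def]
            exact Set.indicator_of_mem (by simpa [hb_def] using hRb) _
          calc ENNReal.ofReal d ^ q ≤ (3 : ℝ≥0∞) ^ q * ENNReal.ofReal b ^ q := hle
            _ = (3 : ℝ≥0∞) ^ q * G2 z.2 := by rw [hGval]
            _ ≤ (3 : ℝ≥0∞) ^ q * (G1 z.1 + G2 z.2) :=
                mul_le_mul_right le_add_self _
            _ ≤ _ := le_add_self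
        · have hRa : R < a := by
            by_contra hc
            exact hcase ⟨not_lt.1 hc, le_trans hab (not_lt.1 hc)⟩
          have hd3 : d ≤ 3 * a := by
            have h1 : dist x₀ y₀ ≤ R := hRC
            linarith
          have hle : ENNReal.ofReal d ^ q ≤ (3 : ℝ≥0∞) ^ q * ENNReal.ofReal a ^ q := by
            rw [← ENNReal.mul_rpow_of_nonneg _ _ hq0.le]
            refine ENNReal.rpow_le_rpow ?_ hq0.le
            calc ENNReal.ofReal d ≤ ENNReal.ofReal (3 * a) := ENNReal.ofReal_le_ofReal hd3
              _ = 3 * ENNReal.ofReal a := by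
                  rw [ENNReal.ofReal_mul (by norm_num)]; norm_num
          have hGval : G1 z.1 = ENNReal.ofReal a ^ q := by
            simp only [hG1_def]
            exact Set.indicator_of_mem (by simpa [ha_def] using hRa) _
          calc ENNReal.ofReal d ^ q ≤ (3 : ℝ≥0∞) ^ q * ENNReal.ofReal a ^ q := hle
            _ = (3 : ℝ≥0∞) ^ q * G1 z.1 := by rw [hGval]
            _ ≤ (3 : ℝ≥0∞) ^ q * (G1 z.1 + G2 z.2) :=
                mul_le_mul_right le_self_add _
            _ ≤ _ := le_add_self
    -- marginal computations
    have hT1 : (∫⁻ z : S × S, G1 z.1 ∂γ) < η := by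
      have heq : (∫⁻ z : S × S, G1 z.1 ∂γ) = ∫⁻ x, G1 x ∂P := by
        rw [← hγ1, lintegral_map hG1m measurable_fst]
      rw [heq, hG1_def, lintegral_indicator hs1]
      refine lt_of_le_of_lt (lintegral_mono_set fun x hx => ?_) hnP
      exact lt_trans hRnP hx
    have hT2 : (∫⁻ z : S × S, G2 z.2 ∂γ) < η := by
      have heq : (∫⁻ z : S × S, G2 z.2 ∂γ) = ∫⁻ y, G2 y ∂Q := by
        rw [← hγ2, lintegral_map hG2m measurable_snd]
      rw [heq, hG2_def, lintegral_indicator hs2]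
      refine lt_of_le_of_lt (lintegral_mono_set fun y hy => ?_) hnQ
      exact lt_trans hRnQ hy
    -- integrate the pointwise bound
    have hIq : (∫⁻ z : S × S, ENNReal.ofReal (dist z.1 z.2) ^ q ∂γ)
        ≤ ENNReal.ofReal (B ^ q) := by
      have step1 : (∫⁻ z : S × S, ENNReal.ofReal (dist z.1 z.2) ^ q ∂γ)
          ≤ ENNReal.ofReal K ^ (q - p) * (∫⁻ z : S × S, ENNReal.ofReal (dist z.1 z.2) ^ p ∂γ)
            + (3 : ℝ≥0∞) ^ q * ((∫⁻ z : S × S, G1 z.1 ∂γ) + (∫⁻ z : S × S, G2 z.2 ∂γ)) := by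
        refine le_trans (lintegral_mono keypt) (le_of_eq ?_)
        have hm1 : Measurable fun z : S × S =>
            ENNReal.ofReal K ^ (q - p) * ENNReal.ofReal (dist z.1 z.2) ^ p :=
          (ENNReal.continuous_rpow_const.measurable.comp hDm).const_mul _
        have hg1 : Measurable fun z : S × S => G1 z.1 := hG1m.comp measurable_fst
        have hg2 : Measurable fun z : S × S => G2 z.2 := hG2m.comp measurable_snd
        rw [lintegral_add_left hm1]
        congr 1
        · exact lintegral_const_mul _ (ENNReal.continuous_rpow_const.measurable.comp hDm)
        · rw [lintegral_const_mul _ (f := fun z : S × S => G1 z.1 + G2 z.2) (hg1.add hg2)]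
          congr 1
          exact lintegral_add_left hg1 _
      have step2 : ENNReal.ofReal K ^ (q - p)
            * (∫⁻ z : S × S, ENNReal.ofReal (dist z.1 z.2) ^ p ∂γ)
          ≤ ENNReal.ofReal (φ p) := by
        refine le_trans (mul_le_mul_right hIp _) (le_of_eq ?_)
        rw [ENNReal.ofReal_rpow_of_pos hK, ENNReal.ofReal_rpow_of_pos hA,
          ← ENNReal.ofReal_mul (Real.rpow_nonneg hK.le _)]
      have step3 : (3 : ℝ≥0∞) ^ q * ((∫⁻ z : S × S, G1 z.1 ∂γ) + (∫⁻ z : S × S, G2 z.2 ∂γ))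
          ≤ ENNReal.ofReal δ := by
        refine le_trans (mul_le_mul_right (add_le_add hT1.le hT2.le) _) ?_
        have : (3 : ℝ≥0∞) ^ q * (η + η) = (2 * (3 : ℝ≥0∞) ^ q) * η := by ring
        rw [this, hη_def]
        exact ENNReal.mul_div_le
      calc (∫⁻ z : S × S, ENNReal.ofReal (dist z.1 z.2) ^ q ∂γ)
          ≤ ENNReal.ofReal (φ p) + ENNReal.ofReal δ :=
            le_trans step1 (add_le_add step2 step3)
        _ = ENNReal.ofReal (φ p + δ) :=
            (ENNReal.ofReal_add (by positivity) hδ.le).symm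
        _ ≤ ENNReal.ofReal (B ^ q) := by
            refine ENNReal.ofReal_le_ofReal ?_
            simp only [hδ_def] at hφp ⊢
            nlinarith [hφp]
    -- conclude
    have hWq : Wp q P Q ≤ (∫⁻ z : S × S, ENNReal.ofReal (dist z.1 z.2) ^ q ∂γ) ^ (1 / q) := by
      rw [Wp]
      exact iInf₂_le γ ⟨hγ1, hγ2⟩
    refine le_trans hWq ?_
    calc (∫⁻ z : S × S, ENNReal.ofReal (dist z.1 z.2) ^ q ∂γ) ^ (1 / q)
        ≤ (ENNReal.ofReal (B ^ q)) ^ (1 / q) :=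
          ENNReal.rpow_le_rpow hIq (by positivity)
      _ = ENNReal.ofReal B := by
          rw [← ENNReal.ofReal_rpow_of_pos hB, ← ENNReal.rpow_mul,
            mul_one_div_cancel hq0.ne', ENNReal.rpow_one]
  calc Wp q P Q ≤ ENNReal.ofReal (M + e) := main
    _ = ENNReal.ofReal M + ENNReal.ofReal e := ENNReal.ofReal_add hM.le he.le
    _ = ENNReal.ofReal M + ε := by rw [he_def, ENNReal.ofReal_coe_nnreal]
end

section
/- Let p = (p_{ij})_{i,j∈[M]} be a probability distribution on [M] × [M] with p_{ij} > 0 for all i, j, let (q_i)_{i∈[M]} be a probability vector with q_i > 0 for all i, and let q = (q_{ij}) be the minimizer of D_KL(q ‖ p) over probability distributions on [M] × [M] with Σ_j q_{ij} = q_i and Σ_j q_{ji} = q_i for all i ∈ [M]. Then: (a) there exist vectors f = (f_i) and g = (g_i) with positive components such that q_{ij} = f_i g_j p_{ij} for all i, j, and f, g are uniquely determined (up to a multiplicative constant) by the equations q_i = f_i Σ_j g_j p_{ij} and q_j = g_j Σ_i f_i p_{ij}; (b) for any q' = (q'_{ij}) satisfying the same marginal constraints, Σ_{i,j} (q'_{ij}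 − q_{ij}) log(q_{ij}/p_{ij}) = 0; (c) for all i, j ∈ [M], q_{ij} ≥ q_i q_j c³ where c = min_{i,j∈[M]} p_{ij}. -/
open Filter Topology

/-- Discrete Kullback–Leibler divergence on `Fin M × Fin M`:
`D_KL(q ‖ p) = Σ_{i,j} q_{ij} log(q_{ij}/p_{ij})`. -/
noncomputable def dklD {M : ℕ} (q p : Fin M → Fin M → ℝ) : ℝ :=
  ∑ i, ∑ j, q i j * Real.log (q i j / p i j)

lemma hlog_split {x c : ℝ} (hx : 0 ≤ x) (hc : 0 < c) :
    x * Real.log (x / c) = x * Real.log x - x * Real.log c := by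
  rcases eq_or_lt_of_le hx with rfl | hx
  · simp
  · rw [Real.log_div hx.ne' hc.ne']; ring

lemma conv_aux {c : ℝ} (hc : 0 < c) {a b t : ℝ} (ha : 0 ≤ a) (hb : 0 ≤ b)
    (ht0 : 0 ≤ t) (ht1 : t ≤ 1) :
    ((1 - t) * a + t * b) * Real.log (((1 - t) * a + t * b) / c) ≤
      (1 - t) * (a * Real.log (a / c)) + t * (b * Real.log (b / c)) := by
  have hmem : (1 - t) * a + t * b ∈ Set.Ici (0:ℝ) := by
    have : 0 ≤ (1 - t) * a := mul_nonneg (by linarith) ha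
    have : 0 ≤ t * b := mul_nonneg ht0 hb
    simp only [Set.mem_Ici]; nlinarith
  have key := Real.convexOn_mul_log.2 (Set.mem_Ici.2 ha) (Set.mem_Ici.2 hb)
    (by linarith : (0:ℝ) ≤ 1 - t) ht0 (by ring)
  simp only [smul_eq_mul] at key
  rw [hlog_split hmem hc, hlog_split ha hc, hlog_split hb hc]
  nlinarith [key]

lemma marg_zero {M : ℕ} (qv : Fin M → ℝ) (q1 q2 : Fin M → Fin M → ℝ)
    (h1r : ∀ i, ∑ j, q1 i j = qv i) (h1c : ∀ j, ∑ i, q1 i j = qv j)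
    (h2r : ∀ i, ∑ j, q2 i j = qv i) (h2c : ∀ j, ∑ i, q2 i j = qv j)
    (A B : Fin M → ℝ) :
    ∑ i, ∑ j, (q1 i j - q2 i j) * (A i + B j) = 0 := by
  have : ∀ i j, (q1 i j - q2 i j) * (A i + B j)
      = (q1 i j * A i - q2 i j * A i) + (q1 i j * B j - q2 i j * B j) := by intros; ring
  simp only [this, Finset.sum_add_distrib, Finset.sum_sub_distrib]
  have e1 : ∀ i : Fin M, ∑ j, q1 i j * A i = qv i * A i := by
    intro i; rw [← Finset.sum_mul, h1r]
  have e2 : ∀ i : Fin M, ∑ j, q2 i j * A i = qv i * A i := by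
    intro i; rw [← Finset.sum_mul, h2r]
  have e3 : ∑ i, ∑ j, q1 i j * B j = ∑ j : Fin M, qv j * B j := by
    rw [Finset.sum_comm]; exact Finset.sum_congr rfl fun j _ => by rw [← Finset.sum_mul, h1c]
  have e4 : ∑ i, ∑ j, q2 i j * B j = ∑ j : Fin M, qv j * B j := by
    rw [Finset.sum_comm]; exact Finset.sum_congr rfl fun j _ => by rw [← Finset.sum_mul, h2c]
  simp [e1, e2, e3, e4]

lemma q_pos {M : ℕ} [NeZero M]
    (p : Fin M → Fin M → ℝ) (hp : ∀ i j, 0 < p i j)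
    (qv : Fin M → ℝ) (hqv : ∀ i, 0 < qv i) (hqvsum : ∑ i, qv i = 1)
    (q : Fin M → Fin M → ℝ) (hq0 : ∀ i j, 0 ≤ q i j)
    (hqrow : ∀ i, ∑ j, q i j = qv i) (hqcol : ∀ j, ∑ i, q i j = qv j)
    (hmin : ∀ q' : Fin M → Fin M → ℝ, (∀ i j, 0 ≤ q' i j) →
      (∀ i, ∑ j, q' i j = qv i) → (∀ j, ∑ i, q' i j = qv j) →
      dklD q p ≤ dklD q' p) :
    ∀ i j, 0 < q i j := by
  intro i0 j0
  rcases eq_or_lt_of_le (hq0 i0 j0) with h0 | h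
  swap; · exact h
  exfalso
  set r : Fin M → Fin M → ℝ := fun a b => qv a * qv b with hr
  have hrpos : ∀ a b, 0 < r a b := fun a b => mul_pos (hqv a) (hqv b)
  set r0 := r i0 j0 with hr0def
  have hr0 : 0 < r0 := hrpos i0 j0
  set K := dklD r p - dklD q p with hK
  set t := min (1/2 : ℝ) (Real.exp (-(K + 1) / r0)) with ht
  have ht0 : 0 < t := lt_min (by norm_num) (Real.exp_pos _)
  have ht1 : t ≤ 1/2 := min_le_left _ _
  have hlogt : r0 * Real.log t ≤ -(K + 1) := by
    have h1 : Real.log t ≤ -(K + 1) / r0 := by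
      calc Real.log t ≤ Real.log (Real.exp (-(K + 1) / r0)) :=
            Real.log_le_log ht0 (min_le_right _ _)
        _ = -(K + 1) / r0 := Real.log_exp _
    calc r0 * Real.log t ≤ r0 * (-(K + 1) / r0) := by
          exact mul_le_mul_of_nonneg_left h1 hr0.le
      _ = -(K + 1) := by field_simp
  -- the perturbed point
  set qt : Fin M → Fin M → ℝ := fun a b => (1 - t) * q a b + t * r a b with hqt
  have hqt0 : ∀ a b, 0 ≤ qt a b := fun a b => by
    have := hq0 a b; have := (hrpos a b).le; have : (0:ℝ) ≤ 1 - t := by linarith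
    positivity
  have hqtrow : ∀ a, ∑ b, qt a b = qv a := by
    intro a
    simp only [hqt]
    rw [Finset.sum_add_distrib, ← Finset.mul_sum, ← Finset.mul_sum, hqrow]
    simp only [hr, ← Finset.mul_sum, hqvsum]
    ring
  have hqtcol : ∀ b, ∑ a, qt a b = qv b := by
    intro b
    simp only [hqt]
    rw [Finset.sum_add_distrib, ← Finset.mul_sum, ← Finset.mul_sum, hqcol]
    have : ∑ a, r a b = qv b := by
      simp only [hr, ← Finset.sum_mul, hqvsum, one_mul]
    rw [this]; ring
  have hle := hmin qt hqt0 hqtrow hqtcol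
  -- key bound : dklD qt p ≤ (1-t) dklD q p + t dklD r p + t * r0 * log t
  have key : dklD qt p ≤ (1 - t) * dklD q p + t * dklD r p + t * r0 * Real.log t := by
    have hpt : ∀ x : Fin M × Fin M,
        qt x.1 x.2 * Real.log (qt x.1 x.2 / p x.1 x.2) ≤
        (1 - t) * (q x.1 x.2 * Real.log (q x.1 x.2 / p x.1 x.2))
        + t * (r x.1 x.2 * Real.log (r x.1 x.2 / p x.1 x.2))
        + (if x = (i0, j0) then t * r0 * Real.log t else 0) := by
      intro ⟨a, b⟩
      by_cases hx : (a, b) = (i0, j0)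
      · obtain ⟨rfl, rfl⟩ := Prod.mk.inj hx
        simp only [if_pos rfl]
        rw [← h0]
        have hrr : r0 = r a b := hr0def
        rw [← hrr]
        have hqtv : qt a b = t * r0 := by simp [hqt, ← h0, hr0def]
        rw [hqtv]
        rw [show t * r0 / p a b = t * (r0 / p a b) by ring,
          Real.log_mul ht0.ne' (div_ne_zero hr0.ne' (hp a b).ne'),
          Real.log_div hr0.ne' (hp a b).ne']
        simp only [zero_mul, mul_zero, if_true, eq_self_iff_true]
        linarith
      · simp only [if_neg hx, add_zero]
        exact conv_aux (hp a b) (hq0 a b) (hrpos a b).le ht0.le (by linarith)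
    have hsum : ∑ x : Fin M × Fin M, qt x.1 x.2 * Real.log (qt x.1 x.2 / p x.1 x.2) ≤
        ∑ x : Fin M × Fin M, ((1 - t) * (q x.1 x.2 * Real.log (q x.1 x.2 / p x.1 x.2))
        + t * (r x.1 x.2 * Real.log (r x.1 x.2 / p x.1 x.2))
        + (if x = (i0, j0) then t * r0 * Real.log t else 0)) :=
      Finset.sum_le_sum fun x _ => hpt x
    have e0 : ∀ u : Fin M → Fin M → ℝ,
        dklD u p = ∑ x : Fin M × Fin M, u x.1 x.2 * Real.log (u x.1 x.2 / p x.1 x.2) := by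
      intro u; simp [dklD, Fintype.sum_prod_type]
    rw [e0 qt, e0 q, e0 r] at *
    rw [Finset.sum_add_distrib, Finset.sum_add_distrib, ← Finset.mul_sum, ← Finset.mul_sum,
      Finset.sum_ite_eq' Finset.univ ((i0, j0) : Fin M × Fin M)] at hsum
    simpa using hsum
  have : dklD qt p ≤ dklD q p + t * (K + r0 * Real.log t) := by
    rw [hK]; nlinarith [key]
  have hneg : K + r0 * Real.log t ≤ -1 := by linarith [hlogt]
  nlinarith [hle, this, ht0]

lemma struct {M : ℕ} [NeZero M]
    (p : Fin M → Fin M → ℝ) (hp : ∀ i j, 0 < p i j)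
    (qv : Fin M → ℝ)
    (q : Fin M → Fin M → ℝ) (hqpos : ∀ i j, 0 < q i j)
    (hqrow : ∀ i, ∑ j, q i j = qv i) (hqcol : ∀ j, ∑ i, q i j = qv j)
    (hmin : ∀ q' : Fin M → Fin M → ℝ, (∀ i j, 0 ≤ q' i j) →
      (∀ i, ∑ j, q' i j = qv i) → (∀ j, ∑ i, q' i j = qv j) →
      dklD q p ≤ dklD q' p) :
    ∀ i i' j j', Real.log (q i j / p i j) + Real.log (q i' j' / p i' j') =
      Real.log (q i j' / p i j') + Real.log (q i' j / p i' j) := by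
  intro i i' j j'
  rcases eq_or_ne i i' with rfl | hii
  · ring
  rcases eq_or_ne j j' with rfl | hjj
  · ring
  set s : Fin M → Fin M → ℝ := fun a b =>
    ((if a = i then (1:ℝ) else 0) - (if a = i' then 1 else 0)) *
    ((if b = j then (1:ℝ) else 0) - (if b = j' then 1 else 0)) with hs
  have hsabs : ∀ a b, |s a b| ≤ 1 := by
    intro a b; simp only [hs]; split_ifs <;> norm_num
  have hsrow : ∀ a, ∑ b, s a b = 0 := by
    intro a
    simp only [hs]
    rw [← Finset.mul_sum]
    rw [Finset.sum_sub_distrib]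
    simp [Finset.sum_ite_eq']
  have hscol : ∀ b, ∑ a, s a b = 0 := by
    intro b
    simp only [hs]
    rw [← Finset.sum_mul]
    rw [Finset.sum_sub_distrib]
    simp [Finset.sum_ite_eq']
  have hne : Nonempty (Fin M × Fin M) := ⟨(i, j)⟩
  obtain ⟨x0, hx0⟩ := Finite.exists_min (fun x : Fin M × Fin M => q x.1 x.2)
  set δ := q x0.1 x0.2 with hδ
  have hδpos : 0 < δ := hqpos _ _
  have hδall : ∀ a b, δ ≤ q a b := fun a b => hx0 (a, b)
  set F : ℝ → ℝ := fun ε => ∑ a, ∑ b,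
    (q a b + ε * s a b) * Real.log ((q a b + ε * s a b) / p a b) with hF
  have hF0 : F 0 = dklD q p := by simp [hF, dklD]
  have hmin' : IsLocalMin F 0 := by
    have hIcc : Set.Icc (-δ) δ ∈ 𝓝 (0:ℝ) := Icc_mem_nhds (by linarith) (by linarith)
    filter_upwards [hIcc] with ε hε
    rw [hF0]
    refine hmin _ ?_ ?_ ?_
    · intro a b
      have h1 := hsabs a b
      have h2 := hδall a b
      have hεa : |ε| ≤ δ := abs_le.mpr ⟨hε.1, hε.2⟩
      have h3 : |ε * s a b| ≤ δ := by
        rw [abs_mul]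
        calc |ε| * |s a b| ≤ δ * 1 := mul_le_mul hεa h1 (abs_nonneg _) hδpos.le
          _ = δ := mul_one δ
      linarith [neg_abs_le (ε * s a b), h3, h2]
    · intro a
      rw [Finset.sum_add_distrib, ← Finset.mul_sum, hsrow a, mul_zero, add_zero, hqrow]
    · intro b
      rw [Finset.sum_add_distrib, ← Finset.mul_sum, hscol b, mul_zero, add_zero, hqcol]
  have hD : HasDerivAt F (∑ a, ∑ b, s a b * (Real.log (q a b / p a b) + 1)) 0 := by
    refine HasDerivAt.fun_sum fun a _ => HasDerivAt.fun_sum fun b _ => ?_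
    show HasDerivAt (fun ε : ℝ => (q a b + ε * s a b) * Real.log ((q a b + ε * s a b) / p a b))
      (s a b * (Real.log (q a b / p a b) + 1)) 0
    have hg : HasDerivAt (fun ε : ℝ => q a b + ε * s a b) (s a b) 0 := by
      simpa using (((hasDerivAt_id (0:ℝ)).mul_const (s a b)).const_add (q a b))
    have hg0 : q a b + 0 * s a b ≠ 0 := by simpa using (hqpos a b).ne'
    have hpos : ∀ᶠ ε in 𝓝 (0:ℝ), 0 < q a b + ε * s a b := by
      have hc : ContinuousAt (fun ε : ℝ => q a b + ε * s a b) 0 := by fun_prop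
      have h0 : (0:ℝ) < q a b + 0 * s a b := by simpa using hqpos a b
      exact hc.eventually (eventually_gt_nhds h0)
    have hD1 : HasDerivAt (fun ε : ℝ => (q a b + ε * s a b) * Real.log (q a b + ε * s a b))
        ((Real.log (q a b) + 1) * s a b) 0 := by
      have := (Real.hasDerivAt_mul_log hg0).comp 0 hg
      simpa [Function.comp_def] using this
    have hD2 : HasDerivAt (fun ε : ℝ => (q a b + ε * s a b) * Real.log (p a b))
        (s a b * Real.log (p a b)) 0 := hg.mul_const _
    have hD3 : HasDerivAt (fun ε : ℝ => (q a b + ε * s a b) * Real.log ((q a b + ε * s a b) / p a b))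
        ((Real.log (q a b) + 1) * s a b - s a b * Real.log (p a b)) 0 := by
      refine (hD1.sub hD2).congr_of_eventuallyEq ?_
      filter_upwards [hpos] with ε hε
      rw [hlog_split hε.le (hp a b)]
      rfl
    convert hD3 using 1
    rw [Real.log_div (hqpos a b).ne' (hp a b).ne']; ring
  have hzero := hmin'.hasDerivAt_eq_zero hD
  have hssum : ∑ a, ∑ b, s a b = (0:ℝ) := by simp [hsrow]
  have hL : ∑ a, ∑ b, s a b * Real.log (q a b / p a b) = 0 := by
    have he : ∀ a b, s a b * (Real.log (q a b / p a b) + 1)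
        = s a b * Real.log (q a b / p a b) + s a b := fun a b => by ring
    simp only [he, Finset.sum_add_distrib] at hzero
    linarith [hssum]
  have heval : ∑ a, ∑ b, s a b * Real.log (q a b / p a b)
      = Real.log (q i j / p i j) + Real.log (q i' j' / p i' j')
        - Real.log (q i j' / p i j') - Real.log (q i' j / p i' j) := by
    have inner : ∀ a, ∑ b, s a b * Real.log (q a b / p a b)
        = ((if a = i then (1:ℝ) else 0) - if a = i' then 1 else 0) *
          (Real.log (q a j / p a j) - Real.log (q a j' / p a j')) := by
      intro a
      have he2 : ∀ b, s a b * Real.log (q a b / p a b)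
          = ((if a = i then (1:ℝ) else 0) - if a = i' then 1 else 0) *
            ((if b = j then (1:ℝ) else 0) * Real.log (q a b / p a b)
              - (if b = j' then (1:ℝ) else 0) * Real.log (q a b / p a b)) := by
        intro b; simp only [hs]; ring
      rw [Finset.sum_congr rfl fun b _ => he2 b, ← Finset.mul_sum]
      congr 1
      rw [Finset.sum_sub_distrib]
      simp [ite_mul, Finset.sum_ite_eq']
    rw [Finset.sum_congr rfl fun a _ => inner a]
    simp only [sub_mul, ite_mul, one_mul, zero_mul, Finset.sum_sub_distrib,
      Finset.sum_ite_eq', Finset.mem_univ, if_true]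
    ring
  rw [heval] at hL
  linarith


/-- **Properties of the information projection.**  Let `p` be a strictly positive
distribution on `[M] × [M]`, `qv` a strictly positive probability vector, and `q` the
minimizer of `D_KL(· ‖ p)` under the constraint that both marginals equal `qv`.  Then
(a) `q_{ij} = f_i g_j p_{ij}` for positive `f, g` uniquely determined, up to a
multiplicative constant, by `qv_i = f_i Σ_j g_j p_{ij}` and `qv_j = g_j Σ_i f_i p_{ij}`;
(b) `Σ_{ij} (q'_{ij} − q_{ij}) log(q_{ij}/p_{ij}) = 0` for any `q'` with the same
marginals; and
(c) `q_{ij} ≥ qv_i qv_j c³` where `c = min_{ij} p_{ij}`. -/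
theorem info_projection_properties {M : ℕ} [NeZero M]
    (p : Fin M → Fin M → ℝ) (hp : ∀ i j, 0 < p i j) (hpsum : ∑ i, ∑ j, p i j = 1)
    (qv : Fin M → ℝ) (hqv : ∀ i, 0 < qv i) (hqvsum : ∑ i, qv i = 1)
    (q : Fin M → Fin M → ℝ) (hq0 : ∀ i j, 0 ≤ q i j)
    (hqrow : ∀ i, ∑ j, q i j = qv i) (hqcol : ∀ j, ∑ i, q i j = qv j)
    (hmin : ∀ q' : Fin M → Fin M → ℝ, (∀ i j, 0 ≤ q' i j) →
      (∀ i, ∑ j, q' i j = qv i) → (∀ j, ∑ i, q' i j = qv j) →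
      dklD q p ≤ dklD q' p) :
    (∃ f g : Fin M → ℝ, (∀ i, 0 < f i) ∧ (∀ i, 0 < g i) ∧
      (∀ i j, q i j = f i * g j * p i j) ∧
      (∀ i, qv i = f i * ∑ j, g j * p i j) ∧
      (∀ j, qv j = g j * ∑ i, f i * p i j) ∧
      (∀ f' g' : Fin M → ℝ, (∀ i, 0 < f' i) → (∀ i, 0 < g' i) →
        (∀ i, qv i = f' i * ∑ j, g' j * p i j) →
        (∀ j, qv j = g' j * ∑ i, f' i * p i j) →
        ∃ c : ℝ, 0 < c ∧ (∀ i, f' i = c * f i) ∧ ∀ j, g' j = g j / c)) ∧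
    (∀ q' : Fin M → Fin M → ℝ, (∀ i j, 0 ≤ q' i j) →
      (∀ i, ∑ j, q' i j = qv i) → (∀ j, ∑ i, q' i j = qv j) →
      ∑ i, ∑ j, (q' i j - q i j) * Real.log (q i j / p i j) = 0) ∧
    (∀ i j, qv i * qv j * (⨅ ij : Fin M × Fin M, p ij.1 ij.2) ^ 3 ≤ q i j) := by
  have hqpos : ∀ i j, 0 < q i j := q_pos p hp qv hqv hqvsum q hq0 hqrow hqcol hmin
  have hst := struct p hp qv q hqpos hqrow hqcol hmin
  set L : Fin M → Fin M → ℝ := fun a b => Real.log (q a b / p a b) with hLdef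
  set f : Fin M → ℝ := fun a => Real.exp (L a 0) with hfdef
  set g : Fin M → ℝ := fun b => Real.exp (L 0 b - L 0 0) with hgdef
  have hfpos : ∀ a, 0 < f a := fun a => Real.exp_pos _
  have hgpos : ∀ b, 0 < g b := fun b => Real.exp_pos _
  have hLadd : ∀ a b, L a b = L a 0 + (L 0 b - L 0 0) := by
    intro a b
    have := hst a 0 b 0
    simp only [hLdef] at this ⊢
    linarith
  have hfact : ∀ a b, q a b = f a * g b * p a b := by
    intro a b
    have h1 : f a * g b = Real.exp (L a b) := by
      rw [hfdef, hgdef]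
      rw [← Real.exp_add]
      congr 1
      linarith [hLadd a b]
    have h2 : Real.exp (L a b) = q a b / p a b := by
      rw [hLdef]
      exact Real.exp_log (div_pos (hqpos a b) (hp a b))
    rw [h1, h2]
    exact (div_mul_cancel₀ _ (hp a b).ne').symm
  have hmargf : ∀ a, qv a = f a * ∑ b, g b * p a b := by
    intro a
    rw [← hqrow a, Finset.mul_sum]
    exact Finset.sum_congr rfl fun b _ => by rw [hfact a b]; ring
  have hmargg : ∀ b, qv b = g b * ∑ a, f a * p a b := by
    intro b
    rw [← hqcol b, Finset.mul_sum]
    exact Finset.sum_congr rfl fun a _ => by rw [hfact a b]; ring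
  -- part (b)
  have hb : ∀ q' : Fin M → Fin M → ℝ,
      (∀ i, ∑ j, q' i j = qv i) → (∀ j, ∑ i, q' i j = qv j) →
      ∑ i, ∑ j, (q' i j - q i j) * L i j = 0 := by
    intro q' hr' hc'
    have := marg_zero qv q' q hr' hc' hqrow hqcol (fun a => L a 0) (fun b => L 0 b - L 0 0)
    rw [← this]
    exact Finset.sum_congr rfl fun a _ => Finset.sum_congr rfl fun b _ => by
      rw [hLadd a b]
  refine ⟨⟨f, g, hfpos, hgpos, hfact, hmargf, hmargg, ?_⟩, fun q' _ hr' hc' => hb q' hr' hc', ?_⟩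
  · -- uniqueness
    intro f' g' hf' hg' hm1 hm2
    set q2 : Fin M → Fin M → ℝ := fun a b => f' a * g' b * p a b with hq2
    have h2row : ∀ a, ∑ b, q2 a b = qv a := by
      intro a
      rw [hm1 a, Finset.mul_sum]
      exact Finset.sum_congr rfl fun b _ => by simp only [hq2]; ring
    have h2col : ∀ b, ∑ a, q2 a b = qv b := by
      intro b
      rw [hm2 b, Finset.mul_sum]
      exact Finset.sum_congr rfl fun a _ => by simp only [hq2]; ring
    have h2pos : ∀ a b, 0 < q2 a b := fun a b =>
      mul_pos (mul_pos (hf' a) (hg' b)) (hp a b)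
    -- key : q2 = q
    have hkey : ∀ a b, q2 a b = q a b := by
      have hptw : ∀ a b, (q2 a b - q a b) * (Real.log (q2 a b) - Real.log (q a b))
          = (q2 a b - q a b) * ((Real.log (f' a) - L a 0) + ((Real.log (g' b) - (L 0 b - L 0 0)))) := by
        intro a b
        have e2 : Real.log (q2 a b) = Real.log (f' a) + Real.log (g' b) + Real.log (p a b) := by
          simp only [hq2]
          rw [Real.log_mul (mul_pos (hf' a) (hg' b)).ne' (hp a b).ne', Real.log_mul (hf' a).ne' (hg' b).ne']
        have e1 : Real.log (q a b) = L a b + Real.log (p a b) := by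
          simp only [hLdef]
          rw [Real.log_div (hqpos a b).ne' (hp a b).ne']
          ring
        rw [e2, e1, hLadd a b]
        ring
      have hsum0 : ∑ a, ∑ b, (q2 a b - q a b) * (Real.log (q2 a b) - Real.log (q a b)) = 0 := by
        rw [Finset.sum_congr rfl fun a _ => Finset.sum_congr rfl fun b _ => hptw a b]
        exact marg_zero qv q2 q h2row h2col hqrow hqcol _ _
      have hnn : ∀ a b, 0 ≤ (q2 a b - q a b) * (Real.log (q2 a b) - Real.log (q a b)) := by
        intro a b
        rcases le_total (q a b) (q2 a b) with h | h
        · exact mul_nonneg (by linarith) (by linarith [Real.log_le_log (hqpos a b) h])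
        · have h1 := Real.log_le_log (h2pos a b) h
          nlinarith
      have hinn : ∀ a ∈ Finset.univ, (0:ℝ) ≤ ∑ b, (q2 a b - q a b) * (Real.log (q2 a b) - Real.log (q a b)) :=
        fun a _ => Finset.sum_nonneg fun b _ => hnn a b
      have hz1 := (Finset.sum_eq_zero_iff_of_nonneg hinn).mp hsum0
      intro a b
      have hz2 := (Finset.sum_eq_zero_iff_of_nonneg
        (fun b _ => hnn a b)).mp (hz1 a (Finset.mem_univ a)) b (Finset.mem_univ b)
      by_contra hne
      rcases lt_or_gt_of_ne hne with h | h
      · have hlt := Real.log_lt_log (h2pos a b) h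
        nlinarith [hz2]
      · have hlt := Real.log_lt_log (hqpos a b) h
        nlinarith [hz2]
    have hfg : ∀ a b, f' a * g' b = f a * g b := by
      intro a b
      have := hkey a b
      rw [hfact a b] at this
      simp only [hq2] at this
      exact mul_right_cancel₀ (hp a b).ne' this
    refine ⟨f' 0 / f 0, div_pos (hf' 0) (hfpos 0), ?_, ?_⟩
    · intro i
      have key : (f' i * f 0 - f' 0 * f i) * g' 0 = 0 := by
        linear_combination f 0 * hfg i 0 - f i * hfg 0 0
      have h0 : f' i * f 0 - f' 0 * f i = 0 :=
        (mul_eq_zero.mp key).resolve_right (hg' 0).ne'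
      have hf0 : f 0 ≠ 0 := (hfpos 0).ne'
      field_simp
      linarith
    · intro j
      have h := hfg 0 j
      rw [eq_div_iff (div_pos (hf' 0) (hfpos 0)).ne']
      have hf0 : f 0 ≠ 0 := (hfpos 0).ne'
      field_simp
      linear_combination h
  · -- part (c)
    intro i j
    set c := ⨅ ij : Fin M × Fin M, p ij.1 ij.2 with hcdef
    have hcle : ∀ a b, c ≤ p a b := fun a b =>
      ciInf_le (Finite.bddBelow_range _) (a, b)
    have hcpos : 0 < c := by
      obtain ⟨x, hx⟩ := exists_eq_ciInf_of_finite (f := fun ij : Fin M × Fin M => p ij.1 ij.2)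
      rw [hcdef, ← hx]
      exact hp x.1 x.2
    have hpone : ∀ a b, p a b ≤ 1 := by
      intro a b
      calc p a b ≤ ∑ b', p a b' :=
            Finset.single_le_sum (fun b' _ => (hp a b').le) (Finset.mem_univ b)
        _ ≤ ∑ a', ∑ b', p a' b' :=
            Finset.single_le_sum (f := fun a' => ∑ b', p a' b')
              (fun a' _ => Finset.sum_nonneg fun b' _ => (hp a' b').le) (Finset.mem_univ a)
        _ = 1 := hpsum
    have hcone : c ≤ 1 := (hcle i j).trans (hpone i j)
    set Sf := ∑ a, f a with hSf
    set Sg := ∑ b, g b with hSg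
    have hSfpos : 0 < Sf := Finset.sum_pos (fun a _ => hfpos a) ⟨i, Finset.mem_univ i⟩
    have hSgpos : 0 < Sg := Finset.sum_pos (fun b _ => hgpos b) ⟨j, Finset.mem_univ j⟩
    have hSS : Sf * Sg * c ≤ 1 := by
      have h1 : ∑ a, ∑ b, f a * g b * c ≤ ∑ a, ∑ b, q a b :=
        Finset.sum_le_sum fun a _ => Finset.sum_le_sum fun b _ => by
          rw [hfact a b]
          exact mul_le_mul_of_nonneg_left (hcle a b) (mul_nonneg (hfpos a).le (hgpos b).le)
      have h2 : ∑ a, ∑ b, f a * g b * c = Sf * Sg * c := by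
        rw [hSf, hSg]
        simp only [Finset.sum_mul, Finset.mul_sum]
        rw [Finset.sum_comm]
      have h3 : ∑ a, ∑ b, q a b = 1 := by
        rw [Finset.sum_congr rfl fun a _ => hqrow a, hqvsum]
      linarith
    have hfSg : qv i ≤ f i * Sg := by
      rw [hmargf i]
      have : ∑ b, g b * p i b ≤ Sg := by
        rw [hSg]
        exact Finset.sum_le_sum fun b _ => by nlinarith [hgpos b, hpone i b, hp i b]
      exact mul_le_mul_of_nonneg_left this (hfpos i).le
    have hgSf : qv j ≤ g j * Sf := by
      rw [hmargg j]
      have : ∑ a, f a * p a j ≤ Sf := by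
        rw [hSf]
        exact Finset.sum_le_sum fun a _ => by nlinarith [hfpos a, hpone a j, hp a j]
      exact mul_le_mul_of_nonneg_left this (hgpos j).le
    have h1 : qv i * qv j ≤ (f i * Sg) * (g j * Sf) :=
      mul_le_mul hfSg hgSf (hqv j).le (mul_pos (hfpos i) hSgpos).le
    have s1 : c * (qv i * qv j) ≤ (f i * g j * c) * (Sf * Sg) := by nlinarith [hcpos]
    have s3 : (f i * g j * c) * (Sf * Sg) ≤ q i j * (Sf * Sg) := by
      rw [hfact i j]
      exact mul_le_mul_of_nonneg_right
        (mul_le_mul_of_nonneg_left (hcle i j) (mul_nonneg (hfpos i).le (hgpos j).le))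
        (mul_nonneg hSfpos.le hSgpos.le)
    have s4 : q i j * (Sf * Sg) * c ≤ q i j := by
      have h4 : q i j * (Sf * Sg * c) ≤ q i j * 1 := mul_le_mul_of_nonneg_left hSS (hq0 i j)
      have e4 : q i j * (Sf * Sg) * c = q i j * (Sf * Sg * c) := by ring
      linarith
    have s5 : c * c * (qv i * qv j) ≤ q i j := by
      have t1 : c * (c * (qv i * qv j)) ≤ c * (q i j * (Sf * Sg)) :=
        mul_le_mul_of_nonneg_left (s1.trans s3) hcpos.le
      have e1 : c * (q i j * (Sf * Sg)) = q i j * (Sf * Sg) * c := by ring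
      have e2 : c * (c * (qv i * qv j)) = c * c * (qv i * qv j) := by ring
      linarith
    have e3 : qv i * qv j * c ^ 3 = (c * c * (qv i * qv j)) * c := by ring
    have t2 : (c * c * (qv i * qv j)) * c ≤ q i j * 1 :=
      mul_le_mul s5 hcone hcpos.le (hq0 i j)
    linarith
end
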